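/- arXiv:1510.01053 — 2 statements merged into one kernel-verified Lean document; each statement's English description precedes it below -/
import Mathlib

section
/- Let τ_u, τ_v : ℝ² → ℝ be C³ with ∂₁²τ_u, ∂₁²τ_v nonvanishing, and suppose ∂₁²τ_u · ∂₂²τ_v = ∂₁²τ_v · ∂₂²τ_u (equal 'Hessian ratios'). Define A and B as above. Then the vector field (A, B) is closed: ∂₂A = ∂₁B, hence on a simply connected domain there exists F with ∂₁F = A and ∂₂F = B. -/
open MeasureTheory intervalIntegral

noncomputable def pp1 (f : ℝ × ℝ → ℝ) : ℝ × ℝ → ℝ := fun z => fderiv ℝ f z (1, 0)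
noncomputable def pp2 (f : ℝ × ℝ → ℝ) : ℝ × ℝ → ℝ := fun z => fderiv ℝ f z (0, 1)

lemma hasDerivAt_pp1 {f : ℝ × ℝ → ℝ} (hf : Differentiable ℝ f) (x y : ℝ) :
    HasDerivAt (fun s => f (s, y)) (pp1 f (x, y)) x := by
  have hline : HasDerivAt (fun s : ℝ => (s, y)) ((1:ℝ), (0:ℝ)) x :=
    (hasDerivAt_id x).prodMk (hasDerivAt_const x y)
  exact (hf (x, y)).hasFDerivAt.comp_hasDerivAt x hline

lemma hasDerivAt_pp2 {f : ℝ × ℝ → ℝ} (hf : Differentiable ℝ f) (x y : ℝ) :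
    HasDerivAt (fun t => f (x, t)) (pp2 f (x, y)) y := by
  have hline : HasDerivAt (fun t : ℝ => (x, t)) ((0:ℝ), (1:ℝ)) y :=
    (hasDerivAt_const y x).prodMk (hasDerivAt_id y)
  exact (hf (x, y)).hasFDerivAt.comp_hasDerivAt y hline

lemma contDiff_pp1 {f : ℝ × ℝ → ℝ} {n m : WithTop ℕ∞} (hf : ContDiff ℝ n f)
    (h : m + 1 ≤ n) : ContDiff ℝ m (pp1 f) :=
  (hf.fderiv_right h).clm_apply contDiff_const

lemma contDiff_pp2 {f : ℝ × ℝ → ℝ} {n m : WithTop ℕ∞} (hf : ContDiff ℝ n f)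
    (h : m + 1 ≤ n) : ContDiff ℝ m (pp2 f) :=
  (hf.fderiv_right h).clm_apply contDiff_const

lemma pp_comm {f : ℝ × ℝ → ℝ} (hf : ContDiff ℝ 2 f) : pp1 (pp2 f) = pp2 (pp1 f) := by
  funext z
  have hd : DifferentiableAt ℝ (fderiv ℝ f) z :=
    ((hf.fderiv_right (m := 1) (by norm_num)).differentiable one_ne_zero) z
  have h1 : pp1 (pp2 f) z = fderiv ℝ (fderiv ℝ f) z (1, 0) (0, 1) := by
    show fderiv ℝ (fun w => fderiv ℝ f w ((0:ℝ), (1:ℝ))) z (1, 0) = _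
    rw [fderiv_clm_apply hd (differentiableAt_const _)]
    simp
  have h2 : pp2 (pp1 f) z = fderiv ℝ (fderiv ℝ f) z (0, 1) (1, 0) := by
    show fderiv ℝ (fun w => fderiv ℝ f w ((1:ℝ), (0:ℝ))) z (0, 1) = _
    rw [fderiv_clm_apply hd (differentiableAt_const _)]
    simp
  rw [h1, h2, (hf.contDiffAt.isSymmSndFDerivAt (by norm_num)).eq]

lemma conv_d1 {τ : ℝ → ℝ → ℝ} (h : ContDiff ℝ 3 (Function.uncurry τ)) (x y : ℝ) :
    deriv (fun s => τ s y) x = pp1 (Function.uncurry τ) (x, y) :=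
  (hasDerivAt_pp1 (h.differentiable (by norm_num)) x y).deriv

lemma conv_d2 {τ : ℝ → ℝ → ℝ} (h : ContDiff ℝ 3 (Function.uncurry τ)) (x y : ℝ) :
    deriv (fun t => τ x t) y = pp2 (Function.uncurry τ) (x, y) :=
  (hasDerivAt_pp2 (h.differentiable (by norm_num)) x y).deriv

lemma conv_d11 {τ : ℝ → ℝ → ℝ} (h : ContDiff ℝ 3 (Function.uncurry τ)) (x y : ℝ) :
    deriv (deriv (fun s => τ s y)) x = pp1 (pp1 (Function.uncurry τ)) (x, y) := by
  have h1 : deriv (fun s => τ s y) = fun s => pp1 (Function.uncurry τ) (s, y) :=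
    funext fun s => conv_d1 h s y
  rw [h1]
  exact (hasDerivAt_pp1 ((contDiff_pp1 (m := 2) h (by norm_num)).differentiable (by norm_num)) x y).deriv

lemma conv_d22 {τ : ℝ → ℝ → ℝ} (h : ContDiff ℝ 3 (Function.uncurry τ)) (x y : ℝ) :
    deriv (deriv (fun t => τ x t)) y = pp2 (pp2 (Function.uncurry τ)) (x, y) := by
  have h1 : deriv (fun t => τ x t) = fun t => pp2 (Function.uncurry τ) (x, t) :=
    funext fun t => conv_d2 h x t
  rw [h1]
  exact (hasDerivAt_pp2 ((contDiff_pp2 (m := 2) h (by norm_num)).differentiable (by norm_num)) x y).deriv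

lemma conv_d12 {τ : ℝ → ℝ → ℝ} (h : ContDiff ℝ 3 (Function.uncurry τ)) (x y : ℝ) :
    deriv (fun s => deriv (fun t => τ s t) y) x = pp1 (pp2 (Function.uncurry τ)) (x, y) := by
  have h1 : (fun s => deriv (fun t => τ s t) y) = fun s => pp2 (Function.uncurry τ) (s, y) :=
    funext fun s => conv_d2 h s y
  rw [h1]
  exact (hasDerivAt_pp1 ((contDiff_pp2 (m := 2) h (by norm_num)).differentiable (by norm_num)) x y).deriv

/-- Equal Hessian ratios imply (A,B) is closed, hence exact on a simply
connected open domain. -/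
theorem stmt5 (τu τv A B : ℝ → ℝ → ℝ)
    (hu : ContDiff ℝ 3 (Function.uncurry τu))
    (hv : ContDiff ℝ 3 (Function.uncurry τv))
    (hu2 : ∀ x y, deriv (deriv (fun s => τu s y)) x ≠ 0)
    (hv2 : ∀ x y, deriv (deriv (fun s => τv s y)) x ≠ 0)
    (hHess : ∀ x y,
      deriv (deriv (fun s => τu s y)) x * deriv (deriv (fun t => τv x t)) y =
      deriv (deriv (fun s => τv s y)) x * deriv (deriv (fun t => τu x t)) y)
    (hA : ∀ x y, A x y =
      deriv (deriv (fun s => τu s y)) x * deriv (fun t => τv x t) y -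
      deriv (deriv (fun s => τv s y)) x * deriv (fun t => τu x t) y)
    (hB : ∀ x y, B x y =
      deriv (fun s => deriv (fun t => τu s t) y) x * deriv (fun t => τv x t) y -
      deriv (fun s => deriv (fun t => τv s t) y) x * deriv (fun t => τu x t) y)
    (U : Set (ℝ × ℝ)) (hU : IsOpen U) (hUsc : SimplyConnectedSpace U) :
    (∀ x y, deriv (fun t => A x t) y = deriv (fun s => B s y) x) ∧
    ∃ F : ℝ → ℝ → ℝ, ∀ q ∈ U,
      deriv (fun s => F s q.2) q.1 = A q.1 q.2 ∧
      deriv (fun t => F q.1 t) q.2 = B q.1 q.2 := by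
  set Fu := Function.uncurry τu with hFu
  set Fv := Function.uncurry τv with hFv
  -- smoothness of partial derivatives
  have hU1 : ContDiff ℝ 2 (pp1 Fu) := contDiff_pp1 hu (by norm_num)
  have hU2 : ContDiff ℝ 2 (pp2 Fu) := contDiff_pp2 hu (by norm_num)
  have hV1 : ContDiff ℝ 2 (pp1 Fv) := contDiff_pp1 hv (by norm_num)
  have hV2 : ContDiff ℝ 2 (pp2 Fv) := contDiff_pp2 hv (by norm_num)
  have hU11 : ContDiff ℝ 1 (pp1 (pp1 Fu)) := contDiff_pp1 hU1 (by norm_num)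
  have hV11 : ContDiff ℝ 1 (pp1 (pp1 Fv)) := contDiff_pp1 hV1 (by norm_num)
  have hU12 : ContDiff ℝ 1 (pp1 (pp2 Fu)) := contDiff_pp1 hU2 (by norm_num)
  have hV12 : ContDiff ℝ 1 (pp1 (pp2 Fv)) := contDiff_pp1 hV2 (by norm_num)
  have hU22 : ContDiff ℝ 1 (pp2 (pp2 Fu)) := contDiff_pp2 hU2 (by norm_num)
  have hV22 : ContDiff ℝ 1 (pp2 (pp2 Fv)) := contDiff_pp2 hV2 (by norm_num)
  have dU11 : Differentiable ℝ (pp1 (pp1 Fu)) := hU11.differentiable one_ne_zero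
  have dV11 : Differentiable ℝ (pp1 (pp1 Fv)) := hV11.differentiable one_ne_zero
  have dU12 : Differentiable ℝ (pp1 (pp2 Fu)) := hU12.differentiable one_ne_zero
  have dV12 : Differentiable ℝ (pp1 (pp2 Fv)) := hV12.differentiable one_ne_zero
  have dU2 : Differentiable ℝ (pp2 Fu) := hU2.differentiable (by norm_num)
  have dV2 : Differentiable ℝ (pp2 Fv) := hV2.differentiable (by norm_num)
  -- the closed 1-form (AA, BB)
  set AA : ℝ × ℝ → ℝ :=
    fun z => pp1 (pp1 Fu) z * pp2 Fv z - pp1 (pp1 Fv) z * pp2 Fu z with hAAdef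
  set BB : ℝ × ℝ → ℝ :=
    fun z => pp1 (pp2 Fu) z * pp2 Fv z - pp1 (pp2 Fv) z * pp2 Fu z with hBBdef
  set DD : ℝ × ℝ → ℝ := fun z =>
    (pp2 (pp1 (pp1 Fu)) z * pp2 Fv z + pp1 (pp1 Fu) z * pp2 (pp2 Fv) z) -
    (pp2 (pp1 (pp1 Fv)) z * pp2 Fu z + pp1 (pp1 Fv) z * pp2 (pp2 Fu) z) with hDDdef
  set EE : ℝ × ℝ → ℝ := fun z =>
    (pp1 (pp1 (pp2 Fu)) z * pp2 Fv z + pp1 (pp2 Fu) z * pp1 (pp2 Fv) z) -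
    (pp1 (pp1 (pp2 Fv)) z * pp2 Fu z + pp1 (pp2 Fv) z * pp1 (pp2 Fu) z) with hEEdef
  have hAeq : ∀ x y, A x y = AA (x, y) := by
    intro x y
    rw [hA x y, conv_d11 hu, conv_d11 hv, conv_d2 hu, conv_d2 hv]
  have hBeq : ∀ x y, B x y = BB (x, y) := by
    intro x y
    rw [hB x y, conv_d12 hu, conv_d12 hv, conv_d2 hu, conv_d2 hv]
  have K1 : ∀ x y, HasDerivAt (fun t => AA (x, t)) (DD (x, y)) y := by
    intro x y
    exact ((hasDerivAt_pp2 dU11 x y).mul (hasDerivAt_pp2 dV2 x y)).sub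
      ((hasDerivAt_pp2 dV11 x y).mul (hasDerivAt_pp2 dU2 x y))
  have K2 : ∀ x y, HasDerivAt (fun s => BB (s, y)) (EE (x, y)) x := by
    intro x y
    exact ((hasDerivAt_pp1 dU12 x y).mul (hasDerivAt_pp1 dV2 x y)).sub
      ((hasDerivAt_pp1 dV12 x y).mul (hasDerivAt_pp1 dU2 x y))
  -- Clairaut for third derivatives
  have hcomm_u : pp1 (pp1 (pp2 Fu)) = pp2 (pp1 (pp1 Fu)) := by
    rw [pp_comm (hu.of_le (by norm_num)), pp_comm hU1]
  have hcomm_v : pp1 (pp1 (pp2 Fv)) = pp2 (pp1 (pp1 Fv)) := by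
    rw [pp_comm (hv.of_le (by norm_num)), pp_comm hV1]
  -- translated Hessian hypothesis
  have hHessP : ∀ x y, pp1 (pp1 Fu) (x, y) * pp2 (pp2 Fv) (x, y)
      = pp1 (pp1 Fv) (x, y) * pp2 (pp2 Fu) (x, y) := by
    intro x y
    have := hHess x y
    rwa [conv_d11 hu, conv_d11 hv, conv_d22 hu, conv_d22 hv] at this
  have hDE : ∀ x y, DD (x, y) = EE (x, y) := by
    intro x y
    rw [hDDdef, hEEdef]
    simp only [hcomm_u, hcomm_v]
    linear_combination hHessP x y
  constructor
  · intro x y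
    have e1 : (fun t => A x t) = fun t => AA (x, t) := funext fun t => hAeq x t
    have e2 : (fun s => B s y) = fun s => BB (s, y) := funext fun s => hBeq s y
    rw [e1, e2, (K1 x y).deriv, (K2 x y).deriv, hDE]
  · -- continuity facts
    have contAA : Continuous AA :=
      ((hU11.continuous.mul hV2.continuous).sub (hV11.continuous.mul hU2.continuous))
    have contBB : Continuous BB :=
      ((hU12.continuous.mul hV2.continuous).sub (hV12.continuous.mul hU2.continuous))
    have contDD : Continuous DD := by
      refine Continuous.sub (Continuous.add ?_ ?_) (Continuous.add ?_ ?_)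
      · exact (contDiff_pp2 hU11 (by norm_num) : ContDiff ℝ 0 _).continuous.mul hV2.continuous
      · exact hU11.continuous.mul hV22.continuous
      · exact (contDiff_pp2 hV11 (by norm_num) : ContDiff ℝ 0 _).continuous.mul hU2.continuous
      · exact hV11.continuous.mul hU22.continuous
    have contEE : Continuous EE := by
      refine Continuous.sub (Continuous.add ?_ ?_) (Continuous.add ?_ ?_)
      · exact (contDiff_pp1 hU12 (by norm_num) : ContDiff ℝ 0 _).continuous.mul hV2.continuous
      · exact hU12.continuous.mul hV12.continuous
      · exact (contDiff_pp1 hV12 (by norm_num) : ContDiff ℝ 0 _).continuous.mul hU2.continuous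
      · exact hV12.continuous.mul hU12.continuous
    refine ⟨fun x y => (∫ s in (0:ℝ)..x, AA (s, y)) + ∫ t in (0:ℝ)..y, BB (0, t),
      fun q _ => ⟨?_, ?_⟩⟩
    · -- ∂₁ F = A
      obtain ⟨x, y⟩ := q
      show deriv (fun s => (∫ σ in (0:ℝ)..s, AA (σ, y)) + ∫ t in (0:ℝ)..y, BB (0, t)) x
        = A x y
      rw [deriv_add_const]
      have hcont1 : Continuous fun σ : ℝ => AA (σ, y) :=
        contAA.comp (continuous_id.prodMk continuous_const)
      rw [Continuous.deriv_integral (fun σ => AA (σ, y)) hcont1 0 x]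
      exact (hAeq x y).symm
    · -- ∂₂ F = B
      obtain ⟨x, y⟩ := q
      show deriv (fun t => (∫ s in (0:ℝ)..x, AA (s, t)) + ∫ τ in (0:ℝ)..t, BB (0, τ)) y
        = B x y
      have contBB0 : Continuous fun t => BB (0, t) :=
        contBB.comp (continuous_const.prodMk continuous_id)
      have h2a : HasDerivAt (fun t => ∫ τ in (0:ℝ)..t, BB (0, τ)) (BB (0, y)) y :=
        intervalIntegral.integral_hasDerivAt_right (contBB0.intervalIntegrable 0 y)
          (contBB0.aestronglyMeasurable.stronglyMeasurableAtFilter)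
          contBB0.continuousAt
      -- differentiation under the integral sign
      have h2b : HasDerivAt (fun t => ∫ s in (0:ℝ)..x, AA (s, t))
          (∫ s in (0:ℝ)..x, DD (s, y)) y := by
        obtain ⟨C, hC⟩ := (isCompact_uIcc.prod (isCompact_Icc (a := y - 1) (b := y + 1))).exists_bound_of_continuousOn
          contDD.continuousOn (E := ℝ)
        have key := intervalIntegral.hasDerivAt_integral_of_dominated_loc_of_deriv_le
          (F := fun t s => AA (s, t)) (F' := fun t s => DD (s, t)) (x₀ := y)
          (a := 0) (b := x) (μ := volume) (bound := fun _ => C)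
          (Metric.ball_mem_nhds y one_pos)
          (Filter.Eventually.of_forall fun t =>
            (contAA.comp (continuous_id.prodMk continuous_const)).aestronglyMeasurable)
          ((contAA.comp (continuous_id.prodMk continuous_const)).intervalIntegrable 0 x)
          ((contDD.comp (continuous_id.prodMk continuous_const)).aestronglyMeasurable)
          (Filter.Eventually.of_forall fun s hs => ?_)
          (intervalIntegrable_const)
          (Filter.Eventually.of_forall fun s _ => fun t _ => K1 s t)
        · exact key.2
        · intro t ht
          have hmem : (s, t) ∈ Set.uIcc (0:ℝ) x ×ˢ Set.Icc (y - 1) (y + 1) := by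
            constructor
            · exact Set.uIoc_subset_uIcc hs
            · have := Metric.mem_ball.mp ht
              rw [Real.dist_eq] at this
              constructor <;> [linarith [abs_lt.mp this]; linarith [abs_lt.mp this]]
          simpa using hC (s, t) hmem
      have hDint : (∫ s in (0:ℝ)..x, DD (s, y)) = BB (x, y) - BB (0, y) := by
        have := intervalIntegral.integral_eq_sub_of_hasDerivAt
          (f := fun s => BB (s, y)) (f' := fun s => EE (s, y)) (a := (0:ℝ)) (b := x)
          (fun s _ => K2 s y)
          ((contEE.comp (continuous_id.prodMk continuous_const)).intervalIntegrable 0 x)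
        rw [show (fun s => DD (s, y)) = fun s => EE (s, y) from funext fun s => hDE s y]
        exact this
      have := (h2b.fun_add h2a).deriv
      rw [this, hDint, hBeq x y]
      ring
  done
end

section
/- Let h : ℝ² → ℝ be C² and set z = −exp(iπ ∂_y h + ∂₁σ(∂_x h, ∂_y h)) and w = exp(−iπ ∂_x h + ∂₂σ(∂_x h, ∂_y h)) for a smooth σ. Then the equation ∂_x z / z + ∂_y w / w = 0 has real part equal to the Euler–Lagrange equation ∂₁²σ·∂_x²h + 2∂₁∂₂σ·∂_x∂_y h + ∂₂²σ·∂_y²h = 0 (with arguments (∂_x h, ∂_y h)) and imaginary part equal to π(∂_y∂_x h − ∂_x∂_y h) = 0. -/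
open Complex

private lemma lineX {E : Type*} [NormedAddCommGroup E] [NormedSpace ℝ E]
    {f : ℝ × ℝ → E} {p : ℝ × ℝ} (hf : DifferentiableAt ℝ f p) :
    HasDerivAt (fun s => f (s, p.2)) (fderiv ℝ f p (1, 0)) p.1 := by
  have h1 : HasDerivAt (fun s : ℝ => ((s, p.2) : ℝ × ℝ)) ((1 : ℝ), (0 : ℝ)) p.1 :=
    (hasDerivAt_id p.1).prodMk (hasDerivAt_const p.1 p.2)
  exact hf.hasFDerivAt.comp_hasDerivAt p.1 h1

private lemma lineY {E : Type*} [NormedAddCommGroup E] [NormedSpace ℝ E]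
    {f : ℝ × ℝ → E} {p : ℝ × ℝ} (hf : DifferentiableAt ℝ f p) :
    HasDerivAt (fun t => f (p.1, t)) (fderiv ℝ f p (0, 1)) p.2 := by
  have h1 : HasDerivAt (fun t : ℝ => ((p.1, t) : ℝ × ℝ)) ((0 : ℝ), (1 : ℝ)) p.2 :=
    (hasDerivAt_const p.2 p.1).prodMk (hasDerivAt_id p.2)
  exact hf.hasFDerivAt.comp_hasDerivAt p.2 h1

private lemma fdApp {f : ℝ × ℝ → ℝ} (hf : ContDiff ℝ 2 f) (p : ℝ × ℝ) (v : ℝ × ℝ) :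
    HasFDerivAt (fun q => fderiv ℝ f q v)
      ((ContinuousLinearMap.apply ℝ ℝ v).comp (fderiv ℝ (fderiv ℝ f) p)) p := by
  have h1 : HasFDerivAt (fderiv ℝ f) (fderiv ℝ (fderiv ℝ f) p) p :=
    (((hf.fderiv_right (m := 1) (by norm_num)).differentiable one_ne_zero) p).hasFDerivAt
  exact (ContinuousLinearMap.apply ℝ ℝ v).hasFDerivAt.comp p h1

private lemma fdLineX {f : ℝ × ℝ → ℝ} (hf : ContDiff ℝ 2 f) (x y : ℝ) (v : ℝ × ℝ) :
    HasDerivAt (fun s => fderiv ℝ f (s, y) v)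
      (fderiv ℝ (fderiv ℝ f) (x, y) (1, 0) v) x := by
  have h1 : HasDerivAt (fun s : ℝ => ((s, y) : ℝ × ℝ)) ((1 : ℝ), (0 : ℝ)) x :=
    (hasDerivAt_id x).prodMk (hasDerivAt_const x y)
  exact (fdApp hf (x, y) v).comp_hasDerivAt x h1

private lemma fdLineY {f : ℝ × ℝ → ℝ} (hf : ContDiff ℝ 2 f) (x y : ℝ) (v : ℝ × ℝ) :
    HasDerivAt (fun t => fderiv ℝ f (x, t) v)
      (fderiv ℝ (fderiv ℝ f) (x, y) (0, 1) v) y := by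
  have h1 : HasDerivAt (fun t : ℝ => ((x, t) : ℝ × ℝ)) ((0 : ℝ), (1 : ℝ)) y :=
    (hasDerivAt_const y x).prodMk (hasDerivAt_id y)
  exact (fdApp hf (x, y) v).comp_hasDerivAt y h1

private lemma bilin_pair (L : (ℝ × ℝ) →L[ℝ] (ℝ × ℝ) →L[ℝ] ℝ) (a b : ℝ) (v : ℝ × ℝ) :
    L (a, b) v = a * L (1, 0) v + b * L (0, 1) v := by
  have : ((a, b) : ℝ × ℝ) = a • ((1 : ℝ), (0 : ℝ)) + b • ((0 : ℝ), (1 : ℝ)) := by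
    simp [Prod.ext_iff]
  rw [this, map_add, ContinuousLinearMap.add_apply, map_smul, map_smul]
  simp

/-- Real part of ∂ₓz/z + ∂_y w/w is the Euler–Lagrange expression; imaginary
part is π(∂_y∂ₓh − ∂ₓ∂_y h) = 0. -/
theorem stmt18 (σ h : ℝ → ℝ → ℝ)
    (hσ : ContDiff ℝ 2 (Function.uncurry σ))
    (hh : ContDiff ℝ 2 (Function.uncurry h))
    (z w : ℝ → ℝ → ℂ)
    (hx : ℝ → ℝ → ℝ) (hy : ℝ → ℝ → ℝ)
    (hhx : ∀ x y, hx x y = deriv (fun s => h s y) x)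
    (hhy : ∀ x y, hy x y = deriv (fun t => h x t) y)
    (hzdef : ∀ x y, z x y = -Complex.exp
      ((Real.pi : ℂ) * Complex.I * (hy x y : ℂ) +
        ((deriv (fun s => σ s (hy x y)) (hx x y) : ℝ) : ℂ)))
    (hwdef : ∀ x y, w x y = Complex.exp
      (-(Real.pi : ℂ) * Complex.I * (hx x y : ℂ) +
        ((deriv (fun t => σ (hx x y) t) (hy x y) : ℝ) : ℂ))) :
    ∀ x y,
      ((deriv (fun s => z s y) x / z x y + deriv (fun t => w x t) y / w x y).re =
        deriv (deriv (fun s => σ s (hy x y))) (hx x y) * deriv (fun s => hx s y) x +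
        2 * deriv (fun s => deriv (fun t => σ s t) (hy x y)) (hx x y) *
          deriv (fun t => hx x t) y +
        deriv (deriv (fun t => σ (hx x y) t)) (hy x y) * deriv (fun t => hy x t) y) ∧
      ((deriv (fun s => z s y) x / z x y + deriv (fun t => w x t) y / w x y).im =
        Real.pi * (deriv (fun t => hx x t) y - deriv (fun s => hy s y) x)) ∧
      Real.pi * (deriv (fun t => hx x t) y - deriv (fun s => hy s y) x) = 0 := by
  intro x y
  set H := Function.uncurry h with hH
  set S := Function.uncurry σ with hS
  have hHd : Differentiable ℝ H := hh.differentiable two_ne_zero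
  have hSd : Differentiable ℝ S := hσ.differentiable two_ne_zero
  -- hx and hy in terms of fderiv of H
  have ehx : ∀ a b, hx a b = fderiv ℝ H (a, b) (1, 0) := fun a b => by
    rw [hhx]
    exact (lineX (hHd (a, b)) : HasDerivAt (fun s => h s b) _ a).deriv
  have ehy : ∀ a b, hy a b = fderiv ℝ H (a, b) (0, 1) := fun a b => by
    rw [hhy]
    exact (lineY (hHd (a, b)) : HasDerivAt (fun t => h a t) _ b).deriv
  -- second derivatives of h
  set a11 := fderiv ℝ (fderiv ℝ H) (x, y) (1, 0) (1, 0) with ha11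
  set a12 := fderiv ℝ (fderiv ℝ H) (x, y) (1, 0) (0, 1) with ha12
  set a21 := fderiv ℝ (fderiv ℝ H) (x, y) (0, 1) (1, 0) with ha21
  set a22 := fderiv ℝ (fderiv ℝ H) (x, y) (0, 1) (0, 1) with ha22
  have symh : a12 = a21 :=
    (hh.contDiffAt (x := (x, y))).isSymmSndFDerivAt (by simp [minSmoothness_of_isRCLikeNormedField]) (1, 0) (0, 1)
  have Dhx_x : HasDerivAt (fun s => hx s y) a11 x := by
    have := fdLineX hh x y (1, 0)
    simpa [← ehx] using this
  have Dhy_x : HasDerivAt (fun s => hy s y) a12 x := by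
    have := fdLineX hh x y (0, 1)
    simpa [← ehy] using this
  have Dhx_y : HasDerivAt (fun t => hx x t) a21 y := by
    have := fdLineY hh x y (1, 0)
    simpa [← ehx] using this
  have Dhy_y : HasDerivAt (fun t => hy x t) a22 y := by
    have := fdLineY hh x y (0, 1)
    simpa [← ehy] using this
  -- second derivatives of σ at q
  set A := hx x y with hA
  set B := hy x y with hB
  set b11 := fderiv ℝ (fderiv ℝ S) (A, B) (1, 0) (1, 0) with hb11
  set b12 := fderiv ℝ (fderiv ℝ S) (A, B) (1, 0) (0, 1) with hb12
  set b21 := fderiv ℝ (fderiv ℝ S) (A, B) (0, 1) (1, 0) with hb21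
  set b22 := fderiv ℝ (fderiv ℝ S) (A, B) (0, 1) (0, 1) with hb22
  have syms : b12 = b21 :=
    (hσ.contDiffAt (x := (A, B))).isSymmSndFDerivAt (by simp [minSmoothness_of_isRCLikeNormedField]) (1, 0) (0, 1)
  -- partial derivatives of σ as functions
  have eσ1 : ∀ a b, deriv (fun s => σ s b) a = fderiv ℝ S (a, b) (1, 0) := fun a b =>
    (lineX (hSd (a, b)) : HasDerivAt (fun s => σ s b) _ a).deriv
  have eσ2 : ∀ a b, deriv (fun t => σ a t) b = fderiv ℝ S (a, b) (0, 1) := fun a b =>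
    (lineY (hSd (a, b)) : HasDerivAt (fun t => σ a t) _ b).deriv
  -- the three σ-second-derivative terms in the RHS
  have t11 : deriv (deriv (fun s => σ s B)) A = b11 := by
    have e : deriv (fun s => σ s B) = fun a => fderiv ℝ S (a, B) (1, 0) :=
      funext fun a => eσ1 a B
    rw [e]
    exact (fdLineX hσ A B (1, 0)).deriv
  have t12 : deriv (fun s => deriv (fun t => σ s t) B) A = b12 := by
    have e : (fun s => deriv (fun t => σ s t) B) = fun a => fderiv ℝ S (a, B) (0, 1) :=
      funext fun a => eσ2 a B
    rw [e]
    exact (fdLineX hσ A B (0, 1)).deriv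
  have t22 : deriv (deriv (fun t => σ A t)) B = b22 := by
    have e : deriv (fun t => σ A t) = fun b => fderiv ℝ S (A, b) (0, 1) :=
      funext fun b => eσ2 A b
    rw [e]
    exact (fdLineY hσ A B (0, 1)).deriv
  -- derivative of s ↦ ∂₁σ(hx s y, hy s y)
  have Dg1 : HasDerivAt (fun s => fderiv ℝ S (hx s y, hy s y) (1, 0))
      (a11 * b11 + a12 * b21) x := by
    have inner : HasDerivAt (fun s => ((hx s y, hy s y) : ℝ × ℝ)) (a11, a12) x :=
      Dhx_x.prodMk Dhy_x
    have outer := (fdApp hσ (A, B) (1, 0)).comp_hasDerivAt x inner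
    have : ((ContinuousLinearMap.apply ℝ ℝ ((1 : ℝ), (0 : ℝ))).comp
        (fderiv ℝ (fderiv ℝ S) (A, B))) (a11, a12) = a11 * b11 + a12 * b21 := by
      simp only [ContinuousLinearMap.comp_apply, ContinuousLinearMap.apply_apply]
      rw [bilin_pair]
    rwa [this] at outer
  -- derivative of t ↦ ∂₂σ(hx x t, hy x t)
  have Dg2 : HasDerivAt (fun t => fderiv ℝ S (hx x t, hy x t) (0, 1))
      (a21 * b12 + a22 * b22) y := by
    have inner : HasDerivAt (fun t => ((hx x t, hy x t) : ℝ × ℝ)) (a21, a22) y :=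
      Dhx_y.prodMk Dhy_y
    have outer := (fdApp hσ (A, B) (0, 1)).comp_hasDerivAt y inner
    have : ((ContinuousLinearMap.apply ℝ ℝ ((0 : ℝ), (1 : ℝ))).comp
        (fderiv ℝ (fderiv ℝ S) (A, B))) (a21, a22) = a21 * b12 + a22 * b22 := by
      simp only [ContinuousLinearMap.comp_apply, ContinuousLinearMap.apply_apply]
      rw [bilin_pair]
    rwa [this] at outer
  -- z along x
  set F' : ℂ := (Real.pi : ℂ) * Complex.I * (a12 : ℂ) + ((a11 * b11 + a12 * b21 : ℝ) : ℂ)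
    with hF'
  have ez : deriv (fun s => z s y) x / z x y = F' := by
    have hzf : (fun s => z s y) = fun s => -Complex.exp
        ((Real.pi : ℂ) * Complex.I * (hy s y : ℂ) +
          ((fderiv ℝ S (hx s y, hy s y) (1, 0) : ℝ) : ℂ)) := by
      funext s
      rw [hzdef, eσ1]
    have DF : HasDerivAt (fun s => (Real.pi : ℂ) * Complex.I * (hy s y : ℂ) +
        ((fderiv ℝ S (hx s y, hy s y) (1, 0) : ℝ) : ℂ)) F' x := by
      have d1 : HasDerivAt (fun s => ((hy s y : ℝ) : ℂ)) (a12 : ℂ) x :=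
        Dhy_x.ofReal_comp
      have d2 : HasDerivAt (fun s => ((fderiv ℝ S (hx s y, hy s y) (1, 0) : ℝ) : ℂ))
          ((a11 * b11 + a12 * b21 : ℝ) : ℂ) x := Dg1.ofReal_comp
      exact (d1.const_mul ((Real.pi : ℂ) * Complex.I)).add d2
    have Dz : HasDerivAt (fun s => z s y)
        (-(Complex.exp ((Real.pi : ℂ) * Complex.I * (B : ℂ) +
          ((fderiv ℝ S (A, B) (1, 0) : ℝ) : ℂ)) * F')) x := by
      rw [hzf]
      exact DF.cexp.neg
    rw [Dz.deriv, hzdef, eσ1, ← hA, ← hB]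
    rw [neg_div_neg_eq]
    exact mul_div_cancel_left₀ F' (Complex.exp_ne_zero _)
  -- w along y
  set W' : ℂ := -(Real.pi : ℂ) * Complex.I * (a21 : ℂ) + ((a21 * b12 + a22 * b22 : ℝ) : ℂ)
    with hW'
  have ew : deriv (fun t => w x t) y / w x y = W' := by
    have hwf : (fun t => w x t) = fun t => Complex.exp
        (-(Real.pi : ℂ) * Complex.I * (hx x t : ℂ) +
          ((fderiv ℝ S (hx x t, hy x t) (0, 1) : ℝ) : ℂ)) := by
      funext t
      rw [hwdef, eσ2]
    have DW : HasDerivAt (fun t => -(Real.pi : ℂ) * Complex.I * (hx x t : ℂ) +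
        ((fderiv ℝ S (hx x t, hy x t) (0, 1) : ℝ) : ℂ)) W' y := by
      have d1 : HasDerivAt (fun t => ((hx x t : ℝ) : ℂ)) (a21 : ℂ) y :=
        Dhx_y.ofReal_comp
      have d2 : HasDerivAt (fun t => ((fderiv ℝ S (hx x t, hy x t) (0, 1) : ℝ) : ℂ))
          ((a21 * b12 + a22 * b22 : ℝ) : ℂ) y := Dg2.ofReal_comp
      exact (d1.const_mul (-(Real.pi : ℂ) * Complex.I)).add d2
    have Dw : HasDerivAt (fun t => w x t)
        (Complex.exp (-(Real.pi : ℂ) * Complex.I * (A : ℂ) +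
          ((fderiv ℝ S (A, B) (0, 1) : ℝ) : ℂ)) * W') y := by
      rw [hwf]
      exact DW.cexp
    rw [Dw.deriv, hwdef, eσ2, ← hA, ← hB]
    exact mul_div_cancel_left₀ W' (Complex.exp_ne_zero _)
  rw [ez, ew, t11, t12, t22, Dhx_x.deriv, Dhx_y.deriv, Dhy_x.deriv, Dhy_y.deriv]
  refine ⟨?_, ?_, ?_⟩
  · rw [hF', hW']
    simp only [Complex.add_re, Complex.mul_re, Complex.mul_im, Complex.I_re, Complex.I_im,
      Complex.ofReal_re, Complex.ofReal_im, Complex.neg_re, Complex.neg_im]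
    rw [symh, syms]
    ring
  · rw [hF', hW']
    simp only [Complex.add_im, Complex.mul_re, Complex.mul_im, Complex.I_re, Complex.I_im,
      Complex.ofReal_re, Complex.ofReal_im, Complex.neg_re, Complex.neg_im]
    rw [symh]
    ring
  · rw [symh]
    ring
end
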